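/- Let M ≥ 2 be a squarefree odd integer such that −1 is a global norm from K = ℚ(√M). Then the fundamental unit ε_K has norm N(ε_K) = −1 if and only if m = 1 and m' = 1. -/

import Mathlib

open NumberField

/-- The real quadratic field `K = ℚ(√M)`, realized inside `ℝ`. -/
noncomputable def Ksqrt (M : ℕ) : IntermediateField ℚ ℝ :=
  IntermediateField.adjoin ℚ {Real.sqrt M}

/-- `ε` is the fundamental unit of `ℚ(√M)`: `ε > 1` and `ε` is minimal among units `> 1`. -/
def IsFundamentalUnit (M : ℕ) (ε : (𝓞 (Ksqrt M))ˣ) : Prop :=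
  1 < (((ε : 𝓞 (Ksqrt M)) : Ksqrt M) : ℝ) ∧
    ∀ u : (𝓞 (Ksqrt M))ˣ, 1 < (((u : 𝓞 (Ksqrt M)) : Ksqrt M) : ℝ) →
      (((ε : 𝓞 (Ksqrt M)) : Ksqrt M) : ℝ) ≤ (((u : 𝓞 (Ksqrt M)) : Ksqrt M) : ℝ)

/-- With `ε_K = (u + v√M)/2` and `g = gcd(u+2, v)`, this is `m = gcd((u+2)/g, M)`,
the gcd of `A` and `M` where `ε_K + 1 = g(A + B√M)`. -/
def gcdm (M : ℕ) (u v : ℤ) : ℕ := Int.gcd ((u + 2) / (Int.gcd (u + 2) v : ℤ)) (M : ℤ)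

/-- With `ε_K = (u + v√M)/2` and `g' = gcd(u-2, v)`, this is `m' = gcd((u-2)/g', M)`,
the gcd of `A'` and `M` where `ε_K - 1 = g'(A' + B'√M)`. -/
def gcdm' (M : ℕ) (u v : ℤ) : ℕ := Int.gcd ((u - 2) / (Int.gcd (u - 2) v : ℤ)) (M : ℤ)


section Aux
open Polynomial
variable {M : ℕ}

noncomputable def theta (M : ℕ) : Ksqrt M :=
  ⟨Real.sqrt M, IntermediateField.subset_adjoin ℚ _ (Set.mem_singleton _)⟩

variable {M : ℕ}

lemma theta_irr (hM : 2 ≤ M) (hsf : Squarefree M) : Irrational (Real.sqrt M) := by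
  rw [irrational_sqrt_natCast_iff]
  rintro ⟨r, hr⟩
  have h1 : IsUnit r := hsf r (by rw [hr])
  have h2 : r = 1 := Nat.isUnit_iff.mp h1
  subst h2; omega

lemma theta_sq : (theta M) ^ 2 = (M : Ksqrt M) := by
  apply Subtype.ext
  push_cast [theta]
  exact Real.sq_sqrt (by positivity)

lemma theta_integral : IsIntegral ℚ (Real.sqrt M) := by
  refine ⟨X ^ 2 - C (M : ℚ), monic_X_pow_sub_C _ (by norm_num), ?_⟩
  simp [Real.sq_sqrt (show (0:ℝ) ≤ M by positivity)]

lemma minpoly_natdeg (hM : 2 ≤ M) (hsf : Squarefree M) :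
    (minpoly ℚ (Real.sqrt M)).natDegree = 2 := by
  have hle : (minpoly ℚ (Real.sqrt M)).natDegree ≤ 2 := by
    have hdvd : minpoly ℚ (Real.sqrt M) ∣ X ^ 2 - C (M : ℚ) := by
      apply minpoly.dvd
      simp [Real.sq_sqrt (show (0:ℝ) ≤ M by positivity)]
    have h2 : (X ^ 2 - C (M:ℚ)).natDegree = 2 := by
      compute_degree!
    calc _ ≤ (X ^ 2 - C (M:ℚ)).natDegree := Polynomial.natDegree_le_of_dvd hdvd
            ((monic_X_pow_sub_C (M:ℚ) (two_ne_zero)).ne_zero)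
      _ = 2 := h2
  have hge : 2 ≤ (minpoly ℚ (Real.sqrt M)).natDegree := by
    rw [minpoly.two_le_natDegree_iff theta_integral]
    rintro ⟨q, hq⟩
    exact theta_irr hM hsf ⟨q, hq⟩
  omega

open IntermediateField in
noncomputable def pbK (hM : 2 ≤ M) (hsf : Squarefree M) : PowerBasis ℚ (Ksqrt M) :=
  (IntermediateField.adjoin.powerBasis (theta_integral (M := M)))

open IntermediateField in
lemma pbK_gen (hM : 2 ≤ M) (hsf : Squarefree M) : (pbK hM hsf).gen = theta M := by
  rfl

lemma pbK_dim (hM : 2 ≤ M) (hsf : Squarefree M) : (pbK hM hsf).dim = 2 := by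
  simpa [pbK, IntermediateField.adjoin.powerBasis] using minpoly_natdeg hM hsf

noncomputable def bK (hM : 2 ≤ M) (hsf : Squarefree M) : Module.Basis (Fin 2) ℚ (Ksqrt M) :=
  (pbK hM hsf).basis.reindex (finCongr (pbK_dim hM hsf))

lemma bK_zero (hM : 2 ≤ M) (hsf : Squarefree M) : bK hM hsf 0 = 1 := by
  simp [bK, Module.Basis.reindex_apply, PowerBasis.coe_basis]

lemma bK_one (hM : 2 ≤ M) (hsf : Squarefree M) : bK hM hsf 1 = theta M := by
  simp only [bK, Module.Basis.reindex_apply, PowerBasis.coe_basis]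
  rw [pbK_gen]
  norm_num

lemma norm_formula (hM : 2 ≤ M) (hsf : Squarefree M) (a b : ℚ) :
    Algebra.norm ℚ (algebraMap ℚ (Ksqrt M) a + algebraMap ℚ (Ksqrt M) b * theta M)
      = a ^ 2 - M * b ^ 2 := by
  set K := Ksqrt M
  set bb := bK hM hsf with hbb
  have hco : ∀ c : Fin 2 → ℚ,
      (∑ i, c i • bb i) = algebraMap ℚ K (c 0) + algebraMap ℚ K (c 1) * theta M := by
    intro c
    rw [Fin.sum_univ_two, bK_zero, bK_one, Algebra.smul_def, Algebra.smul_def, mul_one]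
  have hrep : ∀ c : Fin 2 → ℚ,
      ⇑(bb.repr (algebraMap ℚ K (c 0) + algebraMap ℚ K (c 1) * theta M)) = c := by
    intro c
    rw [← hco c]
    exact bb.repr_sum_self c
  set x := algebraMap ℚ K a + algebraMap ℚ K b * theta M with hx
  have hrx : ⇑(bb.repr x) = ![a, b] := by
    have h := hrep ![a, b]
    simp only [Matrix.cons_val_zero, Matrix.cons_val_one, Matrix.head_cons] at h
    exact h
  have hxt : x * theta M = algebraMap ℚ K (b * M) + algebraMap ℚ K a * theta M := by
    have ht := theta_sq (M := M)
    rw [map_mul, map_natCast]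
    linear_combination (algebraMap ℚ K b) * ht
  have hrxt : ⇑(bb.repr (x * theta M)) = ![b * M, a] := by
    rw [hxt]
    have h := hrep ![b * (M:ℚ), a]
    simp only [Matrix.cons_val_zero, Matrix.cons_val_one, Matrix.head_cons] at h
    exact h
  rw [Algebra.norm_eq_matrix_det bb, Matrix.det_fin_two]
  rw [Algebra.leftMulMatrix_eq_repr_mul, Algebra.leftMulMatrix_eq_repr_mul,
    Algebra.leftMulMatrix_eq_repr_mul, Algebra.leftMulMatrix_eq_repr_mul,
    bK_zero, bK_one, mul_one]
  rw [show ((bb.repr x) 0 : ℚ) = a from by rw [hrx]; rfl,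
    show ((bb.repr x) 1 : ℚ) = b from by rw [hrx]; rfl,
    show ((bb.repr (x * theta M)) 0 : ℚ) = b * M from by rw [hrxt]; rfl,
    show ((bb.repr (x * theta M)) 1 : ℚ) = a from by rw [hrxt]; rfl]
  ring

lemma decomp (hM : 2 ≤ M) (hsf : Squarefree M) (x : Ksqrt M) :
    ∃ a b : ℚ, x = algebraMap ℚ (Ksqrt M) a + algebraMap ℚ (Ksqrt M) b * theta M := by
  set bb := bK hM hsf
  refine ⟨bb.repr x 0, bb.repr x 1, ?_⟩
  have h := bb.sum_repr x
  rw [Fin.sum_univ_two, bK_zero, bK_one, Algebra.smul_def, Algebra.smul_def, mul_one] at h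
  exact h.symm

lemma coe_algebraMap_real (q : ℚ) : ((algebraMap ℚ (Ksqrt M) q : Ksqrt M) : ℝ) = (q : ℝ) := rfl

lemma coe_theta_real : ((theta M : Ksqrt M) : ℝ) = Real.sqrt M := rfl

lemma coe_combo_real (a b : ℚ) :
    (((algebraMap ℚ (Ksqrt M) a + algebraMap ℚ (Ksqrt M) b * theta M) : Ksqrt M) : ℝ)
      = (a : ℝ) + (b : ℝ) * Real.sqrt M := by
  push_cast
  rfl

lemma norm_pm_one [FiniteDimensional ℚ (Ksqrt M)] (ε : (𝓞 (Ksqrt M))ˣ) :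
    Algebra.norm ℚ ((ε : 𝓞 (Ksqrt M)) : Ksqrt M) = 1 ∨
      Algebra.norm ℚ ((ε : 𝓞 (Ksqrt M)) : Ksqrt M) = -1 := by
  have hu : IsUnit (RingOfIntegers.norm ℚ (ε : 𝓞 (Ksqrt M))) :=
    (RingOfIntegers.isUnit_norm ℚ).mpr ε.isUnit
  set z := RingOfIntegers.norm ℚ (ε : 𝓞 (Ksqrt M)) with hz
  obtain ⟨w, hw⟩ := hu.exists_right_inv
  obtain ⟨n, hn⟩ := IsIntegrallyClosed.isIntegral_iff.mp z.2
  obtain ⟨m, hm⟩ := IsIntegrallyClosed.isIntegral_iff.mp w.2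
  have hn' : ((z : ℚ)) = (n : ℚ) := by exact_mod_cast hn.symm
  have hm' : ((w : ℚ)) = (m : ℚ) := by exact_mod_cast hm.symm
  have hzw : ((z : ℚ)) * ((w : ℚ)) = 1 := by
    have h1 : ((z * w : 𝓞 ℚ) : ℚ) = ((1 : 𝓞 ℚ) : ℚ) := by rw [hw]
    push_cast at h1
    exact h1
  have hnm : n * m = 1 := by
    rw [hn', hm'] at hzw
    exact_mod_cast hzw
  have hn1 : n = 1 ∨ n = -1 := Int.isUnit_iff.mp (IsUnit.of_mul_eq_one _ hnm)
  have hfin : Algebra.norm ℚ ((ε : 𝓞 (Ksqrt M)) : Ksqrt M) = ((z : ℚ)) := rfl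
  rw [hfin, hn']
  rcases hn1 with h | h <;> [left; right] <;> rw [h] <;> norm_num

lemma eta_int_aux (a b : ℤ) (hab : a ^ 2 - (M:ℤ) * b ^ 2 = 4) :
    IsIntegral ℤ (((a : Ksqrt M) + (b : Ksqrt M) * theta M) / 2) := by
  set K := Ksqrt M
  have hK : (a : K) ^ 2 - (M : K) * (b : K) ^ 2 = 4 := by
    have := congrArg (fun t : ℤ => (t : K)) hab
    push_cast at this
    exact this
  refine ⟨Polynomial.X ^ 2 - Polynomial.C a * Polynomial.X + Polynomial.C 1, ?_, ?_⟩
  · monicity!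
  · simp only [Polynomial.eval₂_add, Polynomial.eval₂_sub, Polynomial.eval₂_mul,
      Polynomial.eval₂_pow, Polynomial.eval₂_X, Polynomial.eval₂_C, Polynomial.eval₂_one]
    rw [eq_intCast (algebraMap ℤ K) a, map_one (algebraMap ℤ K)]
    linear_combination ((b : K) ^ 2 / 4) * theta_sq - (1 / 4) * hK

lemma coe_int_combo_real (a b : ℤ) :
    ((((a : Ksqrt M) + (b : Ksqrt M) * theta M) / 2 : Ksqrt M) : ℝ)
      = ((a : ℝ) + (b : ℝ) * Real.sqrt M) / 2 := by
  have h : ∀ z : Ksqrt M, (z : ℝ) = (Ksqrt M).val z := fun _ => rfl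
  rw [h, map_div₀, map_add, map_mul, map_intCast, map_intCast, map_ofNat]
  rfl

set_option maxHeartbeats 1000000 in
lemma no_norm_one (hM : 2 ≤ M) (hsf : Squarefree M) [FiniteDimensional ℚ (Ksqrt M)]
    (ε : (𝓞 (Ksqrt M))ˣ) (hε : IsFundamentalUnit M ε) (a b : ℤ) (ha : 0 < a) (hb : 0 < b)
    (hab : a ^ 2 - (M:ℤ) * b ^ 2 = 4)
    (hεval : (((ε : 𝓞 (Ksqrt M)) : Ksqrt M) : ℝ)
      = (((a ^ 2 - 2 : ℤ) : ℝ) + ((a * b : ℤ) : ℝ) * Real.sqrt M) / 2) : False := by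
  have hK : (a : Ksqrt M) ^ 2 - (M : Ksqrt M) * (b : Ksqrt M) ^ 2 = 4 := by
    have := congrArg (fun t : ℤ => (t : Ksqrt M)) hab
    push_cast at this
    exact this
  set η : Ksqrt M := ((a : Ksqrt M) + (b : Ksqrt M) * theta M) / 2 with hη
  set η' : Ksqrt M := ((a : Ksqrt M) - (b : Ksqrt M) * theta M) / 2 with hη'
  have hηint : IsIntegral ℤ η := eta_int_aux a b hab
  have hη'int : IsIntegral ℤ η' := by
    have h0 := eta_int_aux a (-b) (by linear_combination hab)
    have he : ((a : Ksqrt M) + ((-b : ℤ) : Ksqrt M) * theta M) / 2 = η' := by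
      rw [hη']; push_cast; ring
    rwa [he] at h0
  have ht := theta_sq (M := M)
  have hprod : η * η' = 1 := by
    rw [hη, hη']
    linear_combination (1/4) * hK - ((b : Ksqrt M)^2/4) * ht
  set η0 : 𝓞 (Ksqrt M) := ⟨η, hηint⟩ with hη0
  set η0' : 𝓞 (Ksqrt M) := ⟨η', hη'int⟩ with hη0'
  set υ : (𝓞 (Ksqrt M))ˣ :=
    ⟨η0, η0', Subtype.ext hprod, Subtype.ext (by rw [mul_comm] at hprod; exact hprod)⟩ with hυ
  have hυval : ((υ : 𝓞 (Ksqrt M)) : Ksqrt M) = η := rfl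
  have hηR : ((η : Ksqrt M) : ℝ) = ((a : ℝ) + (b : ℝ) * Real.sqrt M) / 2 := coe_int_combo_real a b
  have hθsq : (Real.sqrt M) ^ 2 = (M : ℝ) := Real.sq_sqrt (by positivity)
  have habR : (a : ℝ) ^ 2 - (M : ℝ) * (b : ℝ) ^ 2 = 4 := by exact_mod_cast hab
  have hεR : (((ε : 𝓞 (Ksqrt M)) : Ksqrt M) : ℝ) = ((η : Ksqrt M) : ℝ) ^ 2 := by
    rw [hεval, hηR]
    push_cast
    linear_combination -((b:ℝ)^2/4) * hθsq + (1/4) * habR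
  have ha3 : 3 ≤ a := by
    by_contra hcon
    push_neg at hcon
    have hM2 : (2:ℤ) ≤ (M:ℤ) := by exact_mod_cast hM
    nlinarith [hab, hb, ha, hM2, mul_pos hb hb]
  have h1η : 1 < ((η : Ksqrt M) : ℝ) := by
    rw [hηR]
    have h1 : (3 : ℝ) ≤ (a : ℝ) := by exact_mod_cast ha3
    have h2 : (1 : ℝ) ≤ (b : ℝ) := by exact_mod_cast hb
    nlinarith [Real.sqrt_nonneg (M : ℝ)]
  have hmin := hε.2 υ (by rw [hυval]; exact h1η)
  rw [hεR, hυval] at hmin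
  nlinarith [hmin, h1η]


lemma sq_mod4 (x : ℤ) : x ^ 2 % 4 = 0 ∨ x ^ 2 % 4 = 1 := by
  rcases Int.even_or_odd x with ⟨k, hk⟩ | ⟨k, hk⟩ <;> subst hk <;>
    [left; right] <;> ring_nf <;> omega

lemma even_of_sq_mod4 (x : ℤ) (h : x ^ 2 % 4 = 0) : 2 ∣ x := by
  rcases Int.even_or_odd x with ⟨k, hk⟩ | ⟨k, hk⟩
  · exact ⟨k, by omega⟩
  · exfalso; subst hk; ring_nf at h; omega

lemma descent (M : ℕ) (hM4 : M % 4 = 3) :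
    ∀ n : ℕ, ∀ r s q : ℤ, r.natAbs + s.natAbs + q.natAbs ≤ n →
      r ^ 2 + q ^ 2 = M * s ^ 2 → r = 0 ∧ s = 0 ∧ q = 0 := by
  intro n
  induction n with
  | zero =>
    intro r s q hb _
    refine ⟨?_, ?_, ?_⟩ <;> [skip; skip; skip] <;>
      · have := Int.natAbs_eq r; have := Int.natAbs_eq s; have := Int.natAbs_eq q; omega
  | succ n ih =>
    intro r s q hb heq
    -- mod 4 analysis
    obtain ⟨t, ht⟩ : ∃ t : ℕ, M = 4 * t + 3 := ⟨M / 4, by omega⟩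
    have h4 : (4 : ℤ) ∣ r ^ 2 ∧ (4:ℤ) ∣ q ^ 2 ∧ (4:ℤ) ∣ s ^ 2 := by
      have hr := sq_mod4 r
      have hs := sq_mod4 s
      have hq := sq_mod4 q
      have heq' : r ^ 2 + q ^ 2 = 4 * (t * s ^ 2) + 3 * s ^ 2 := by
        rw [heq, ht]; push_cast; ring
      constructor
      · omega
      constructor <;> omega
    obtain ⟨r', hr'⟩ := even_of_sq_mod4 r (by omega)
    obtain ⟨q', hq'⟩ := even_of_sq_mod4 q (by omega)
    obtain ⟨s', hs'⟩ := even_of_sq_mod4 s (by omega)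
    have heq2 : r' ^ 2 + q' ^ 2 = M * s' ^ 2 := by
      have : (4:ℤ) * (r' ^ 2 + q' ^ 2) = 4 * (M * s' ^ 2) := by
        subst hr' hq' hs'; ring_nf; ring_nf at heq; linarith
      linarith
    have hsz : r'.natAbs + s'.natAbs + q'.natAbs ≤ n := by
      have : r.natAbs = 2 * r'.natAbs := by subst hr'; simp [Int.natAbs_mul]
      have : s.natAbs = 2 * s'.natAbs := by subst hs'; simp [Int.natAbs_mul]
      have : q.natAbs = 2 * q'.natAbs := by subst hq'; simp [Int.natAbs_mul]
      omega
    obtain ⟨h1, h2, h3⟩ := ih r' s' q' hsz heq2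
    subst hr' hq' hs' h1 h2 h3
    norm_num

lemma mod4_of_rat (M : ℕ) (hModd : Odd M) (hM : 2 ≤ M) (a b : ℚ)
    (h : a ^ 2 - M * b ^ 2 = -1) : M % 4 = 1 := by
  by_contra hne
  have hM4 : M % 4 = 3 := by
    obtain ⟨k, hk⟩ := hModd; omega
  -- clear denominators
  set r : ℤ := a.num * b.den with hr
  set s : ℤ := b.num * a.den with hs
  set q : ℤ := (a.den : ℤ) * b.den with hq
  have hq0 : q ≠ 0 := by
    have h1 : (0:ℤ) < (a.den : ℤ) := by exact_mod_cast a.den_pos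
    have h2 : (0:ℤ) < (b.den : ℤ) := by exact_mod_cast b.den_pos
    have : 0 < q := mul_pos h1 h2
    omega
  have ha : (a.num : ℚ) = a * a.den := by
    exact (Rat.mul_den_eq_num a).symm
  have hbq : (b.num : ℚ) = b * b.den := by
    exact (Rat.mul_den_eq_num b).symm
  have key' : (r:ℚ) ^ 2 + (q:ℚ) ^ 2 = M * (s:ℚ) ^ 2 := by
    push_cast [hr, hs, hq]
    rw [ha, hbq]
    have hda : ((a.den:ℚ)) ≠ 0 := by exact_mod_cast a.den_nz
    have hdb : ((b.den:ℚ)) ≠ 0 := by exact_mod_cast b.den_nz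
    linear_combination ((a.den:ℚ)^2 * (b.den:ℚ)^2) * h
  have key : r ^ 2 + q ^ 2 = M * s ^ 2 := by exact_mod_cast key'
  obtain ⟨_, _, h3⟩ := descent M hM4 (r.natAbs + s.natAbs + q.natAbs) r s q le_rfl key
  exact hq0 h3



-- forward: if u^2 - M v^2 = -4 then gcd((u±2)/g, M) = 1
lemma fwd_aux (M : ℕ) (hModd : Odd M) (u v w : ℤ) (hv : v ≠ 0)
    (hw : w = u + 2 ∨ w = u - 2) (hpell : u ^ 2 - M * v ^ 2 = -4) :
    Int.gcd (w / (Int.gcd w v : ℤ)) (M : ℤ) = 1 := by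
  set g : ℕ := Int.gcd w v with hg
  set d : ℕ := Int.gcd (w / (g : ℤ)) (M : ℤ) with hd
  by_contra hne
  have hd0 : d ≠ 0 := by
    intro h0
    rw [hd, Int.gcd_eq_zero_iff] at h0
    have hM0 : M = 0 := by exact_mod_cast h0.2
    subst hM0
    simp [Nat.odd_iff] at hModd
  obtain ⟨p, hp, hpd⟩ := Nat.exists_prime_and_dvd hne
  have hpM : (p : ℤ) ∣ (M : ℤ) := by
    have : (d : ℤ) ∣ (M : ℤ) := Int.gcd_dvd_right _ _
    exact dvd_trans (Int.natCast_dvd_natCast.mpr hpd) this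
  have hpMnat : p ∣ M := by exact_mod_cast hpM
  have hpodd : p ≠ 2 := by
    rintro rfl
    rw [Nat.odd_iff] at hModd
    omega
  have hpw : (p : ℤ) ∣ w := by
    have h1 : (p : ℤ) ∣ w / (g : ℤ) :=
      dvd_trans (Int.natCast_dvd_natCast.mpr hpd) (Int.gcd_dvd_left _ _)
    have h2 : (g : ℤ) ∣ w := Int.gcd_dvd_left _ _
    exact dvd_trans h1 (Int.ediv_dvd_of_dvd h2)
  have hfac : u ^ 2 - 4 = w * (u + 2) + w * (u - 2) - w * w := by
    rcases hw with rfl | rfl <;> ring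
  have h1 : (p : ℤ) ∣ u ^ 2 - 4 := by
    rw [hfac]
    exact dvd_sub (dvd_add (hpw.mul_right _) (hpw.mul_right _)) (hpw.mul_right _)
  have h2 : (p : ℤ) ∣ (M : ℤ) * v ^ 2 := hpM.mul_right _
  have hp8 : (p : ℤ) ∣ 8 := by
    have : (8 : ℤ) = (M : ℤ) * v ^ 2 - (u ^ 2 - 4) := by linarith [hpell]
    rw [this]
    exact dvd_sub h2 h1
  have hp8n : p ∣ 8 := by exact_mod_cast hp8
  have : p ∣ 2 := hp.dvd_of_dvd_pow (n := 3) (show p ∣ 2 ^ 3 by norm_num; exact hp8n)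
  have : p = 2 := (Nat.prime_dvd_prime_iff_eq hp Nat.prime_two).mp this
  exact hpodd this

lemma zmod8_no2 : ∀ x y m : ZMod 8, m = 1 ∨ m = 5 → x ^ 2 - m * y ^ 2 ≠ 2 := by decide

lemma key_struct (M : ℕ) (hModd : Odd M) (hM1 : M % 4 = 1) (u v : ℤ) (hu : 0 < u) (hv : 0 < v)
    (hpell : u ^ 2 - M * v ^ 2 = 4) (hm : gcdm M u v = 1) :
    ∃ a b : ℤ, 0 < a ∧ 0 < b ∧ a ^ 2 - M * b ^ 2 = 4 ∧ u = a ^ 2 - 2 ∧ v = a * b := by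
  set g : ℕ := Int.gcd (u + 2) v with hg
  have hgpos : 0 < g := by
    rw [hg, Int.gcd_pos_iff]; left; omega
  set A : ℤ := (u + 2) / (g : ℤ) with hA
  set B : ℤ := v / (g : ℤ) with hB
  have hgA : (g : ℤ) * A = u + 2 := Int.mul_ediv_cancel' (Int.gcd_dvd_left _ _)
  have hgB : (g : ℤ) * B = v := Int.mul_ediv_cancel' (Int.gcd_dvd_right _ _)
  have hgz : (0:ℤ) < (g:ℤ) := by exact_mod_cast hgpos
  have hApos : 0 < A := by nlinarith
  have hBpos : 0 < B := by nlinarith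
  have hcopAB : IsCoprime A B := by
    rw [Int.isCoprime_iff_gcd_eq_one]
    exact Int.gcd_div_gcd_div_gcd hgpos
  have hcopAM : IsCoprime A ((M : ℤ)) := by
    rw [Int.isCoprime_iff_gcd_eq_one]
    exact hm
  have hmain : (g:ℤ) * (A ^ 2 - M * B ^ 2) = 4 * A := by
    have h1 : (u + 2) ^ 2 - (M:ℤ) * v ^ 2 = 4 * (u + 2) := by linear_combination hpell
    have h2 : (g:ℤ) * ((g:ℤ) * (A ^ 2 - M * B ^ 2)) = (g:ℤ) * (4 * A) := by
      linear_combination h1 + ((g:ℤ)*A + u + 2 - 4) * hgA - ((M:ℤ)*((g:ℤ)*B + v)) * hgB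
    exact mul_left_cancel₀ (by positivity) h2
  have hAg : A ∣ (g : ℤ) := by
    have h5 : A * ((g:ℤ) * A - 4) = (g:ℤ) * ((M:ℤ) * B ^ 2) := by linear_combination hmain
    have hdvd : A ∣ (g:ℤ) * ((M:ℤ) * B ^ 2) := ⟨(g:ℤ) * A - 4, by linarith [h5]⟩
    exact (hcopAM.mul_right (hcopAB.pow_right)).dvd_of_dvd_mul_right hdvd
  obtain ⟨h, hh⟩ := hAg
  have hhpos : 0 < h := by nlinarith
  have hmain2 : h * (A ^ 2 - M * B ^ 2) = 4 := by
    have : A * (h * (A ^ 2 - M * B ^ 2)) = A * 4 := by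
      linear_combination hmain - (A^2 - (M:ℤ)*B^2)*hh
    have := mul_left_cancel₀ (by positivity : A ≠ 0) this
    linarith
  have hh4 : h ∣ 4 := ⟨A ^ 2 - M * B ^ 2, hmain2.symm⟩
  have hhle : h ≤ 4 := Int.le_of_dvd (by norm_num) hh4
  interval_cases h
  · -- h = 1
    have hgA1 : (g:ℤ) = A := by linarith [hh]
    refine ⟨A, B, hApos, hBpos, by linarith, ?_, ?_⟩
    · linear_combination A * hgA1 - hgA
    · linear_combination B * hgA1 - hgB
  · -- h = 2 : impossible
    exfalso
    have h2 : A ^ 2 - (M:ℤ) * B ^ 2 = 2 := by omega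
    have hz : ((A : ZMod 8)) ^ 2 - (M : ZMod 8) * (B : ZMod 8) ^ 2 = 2 := by
      have := congrArg (fun t : ℤ => (t : ZMod 8)) h2
      push_cast at this
      exact this
    have hM8 : (M : ZMod 8) = 1 ∨ (M : ZMod 8) = 5 := by
      have h8 : M % 8 = 1 ∨ M % 8 = 5 := by
        rcases hModd with ⟨k, hk⟩; omega
      rcases h8 with h8 | h8
      · left; rw [← ZMod.natCast_mod, h8]; rfl
      · right; rw [← ZMod.natCast_mod, h8]; rfl
    exact zmod8_no2 _ _ _ hM8 hz
  · -- h = 3 : impossible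
    exfalso; omega
  · -- h = 4
    have hgA4 : (g:ℤ) = 4 * A := by linarith [hh]
    have h1x : A ^ 2 - (M:ℤ) * B ^ 2 = 1 := by omega
    refine ⟨2 * A, 2 * B, by linarith, by linarith, by linear_combination 4 * h1x, ?_, ?_⟩
    · linear_combination A * hgA4 - hgA
    · linear_combination B * hgA4 - hgB

end Aux

/-- For `M` odd squarefree with `-1` a global norm from `K = ℚ(√M)`,
the fundamental unit has norm `N(ε_K) = -1` iff `m = 1` and `m' = 1`. -/
theorem stmt_0 (M : ℕ) (hM : 2 ≤ M) (hsf : Squarefree M)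
    [FiniteDimensional ℚ (Ksqrt M)]
    (hglob : ∃ x : Ksqrt M, Algebra.norm ℚ x = -1)
    (ε : (𝓞 (Ksqrt M))ˣ) (hε : IsFundamentalUnit M ε)
    (u v : ℤ) (hu : 0 < u) (hv : 0 < v) (hpar : u % 2 = v % 2)
    (huv : (((ε : 𝓞 (Ksqrt M)) : Ksqrt M) : ℝ) = (u + v * Real.sqrt M) / 2) (hModd : Odd M) :
    Algebra.norm ℚ ((ε : 𝓞 (Ksqrt M)) : Ksqrt M) = -1 ↔
      gcdm M u v = 1 ∧ gcdm' M u v = 1 := by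
  -- the fundamental unit as an element of K
  have hdecomp : ((ε : 𝓞 (Ksqrt M)) : Ksqrt M)
      = algebraMap ℚ (Ksqrt M) ((u : ℚ)/2) + algebraMap ℚ (Ksqrt M) ((v : ℚ)/2) * theta M := by
    apply Subtype.val_injective
    have h2 := coe_combo_real (M := M) ((u:ℚ)/2) ((v:ℚ)/2)
    show (((ε : 𝓞 (Ksqrt M)) : Ksqrt M) : ℝ) = _
    rw [huv]
    rw [h2]
    push_cast
    ring
  have hnorm : Algebra.norm ℚ ((ε : 𝓞 (Ksqrt M)) : Ksqrt M)
      = ((u:ℚ)/2)^2 - (M:ℚ) * ((v:ℚ)/2)^2 := by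
    rw [hdecomp]
    exact norm_formula hM hsf _ _
  have hM4 : M % 4 = 1 := by
    obtain ⟨x, hx⟩ := hglob
    obtain ⟨a, b, hab⟩ := decomp hM hsf x
    rw [hab, norm_formula hM hsf] at hx
    exact mod4_of_rat M hModd hM a b hx
  constructor
  · -- norm = -1 → m = 1 ∧ m' = 1
    intro hneg
    rw [hnorm] at hneg
    have hZ : u ^ 2 - (M:ℤ) * v ^ 2 = -4 := by
      have hq : (u:ℚ) ^ 2 - (M:ℚ) * (v:ℚ) ^ 2 = -4 := by linear_combination 4 * hneg
      exact_mod_cast hq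
    exact ⟨fwd_aux M hModd u v (u+2) (by omega) (Or.inl rfl) hZ,
      fwd_aux M hModd u v (u-2) (by omega) (Or.inr rfl) hZ⟩
  · -- m = 1 ∧ m' = 1 → norm = -1
    rintro ⟨hm, -⟩
    rcases norm_pm_one ε with hpos | hneg
    · exfalso
      rw [hnorm] at hpos
      have hZ : u ^ 2 - (M:ℤ) * v ^ 2 = 4 := by
        have hq : (u:ℚ) ^ 2 - (M:ℚ) * (v:ℚ) ^ 2 = 4 := by linear_combination 4 * hpos
        exact_mod_cast hq
      obtain ⟨a, b, ha, hb, hab, hua, hvb⟩ :=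
        key_struct M hModd hM4 u v hu hv hZ hm
      refine no_norm_one hM hsf ε hε a b ha hb hab ?_
      rw [huv, hua, hvb]
    · exact hneg
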